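/- For all t ∈ (0,1), the Legendre relation holds: E(t)K(1−t) + E(1−t)K(t) − K(1−t)K(t) = π/2. -/

import Mathlib

open Real Filter intervalIntegral MeasureTheory Metric

noncomputable section

/-- Complete elliptic integral of the first kind, parameter `t = k²`. -/
def Kel (t : ℝ) : ℝ := ∫ θ in (0:ℝ)..(π/2), 1 / Real.sqrt (1 - t * Real.sin θ ^ 2)

/-- Complete elliptic integral of the second kind, parameter `t = k²`. -/
def Eel (t : ℝ) : ℝ := ∫ θ in (0:ℝ)..(π/2), Real.sqrt (1 - t * Real.sin θ ^ 2)

/-- The modular parameter `τ(t) = i K(1−t)/K(t)`. -/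
def tauP (t : ℝ) : ℂ := Complex.I * (Kel (1 - t)) / (Kel t)

/-- Jacobi theta function θ₁. -/
def theta1 (u τ : ℂ) : ℂ :=
  2 * ∑' n : ℕ, (-1 : ℂ) ^ n * Complex.exp (π * Complex.I * τ * ((n : ℂ) + 1/2) ^ 2) *
      Complex.sin ((2 * (n : ℂ) + 1) * u)

/-- Jacobi theta function θ₂. -/
def theta2 (u τ : ℂ) : ℂ :=
  2 * ∑' n : ℕ, Complex.exp (π * Complex.I * τ * ((n : ℂ) + 1/2) ^ 2) *
      Complex.cos ((2 * (n : ℂ) + 1) * u)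

/-- Jacobi theta function θ₃. -/
def theta3 (u τ : ℂ) : ℂ :=
  1 + 2 * ∑' n : ℕ, Complex.exp (π * Complex.I * τ * ((n : ℂ) + 1) ^ 2) *
      Complex.cos (2 * ((n : ℂ) + 1) * u)

/-- Jacobi theta function θ₄. -/
def theta4 (u τ : ℂ) : ℂ :=
  1 + 2 * ∑' n : ℕ, (-1 : ℂ) ^ (n + 1) * Complex.exp (π * Complex.I * τ * ((n : ℂ) + 1) ^ 2) *
      Complex.cos (2 * ((n : ℂ) + 1) * u)

/-- Jacobi elliptic sn, parameter `t = k²`, via theta quotients. -/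
def snJ (u : ℂ) (t : ℝ) : ℂ :=
  (t : ℂ) ^ (-(1/4 : ℂ)) *
    theta1 (π * u / (2 * Kel t)) (tauP t) / theta4 (π * u / (2 * Kel t)) (tauP t)

/-- Jacobi elliptic cn. -/
def cnJ (u : ℂ) (t : ℝ) : ℂ :=
  ((1 - t : ℂ) / (t : ℂ)) ^ (1/4 : ℂ) *
    theta2 (π * u / (2 * Kel t)) (tauP t) / theta4 (π * u / (2 * Kel t)) (tauP t)

/-- Jacobi elliptic dn. -/
def dnJ (u : ℂ) (t : ℝ) : ℂ :=
  (1 - t : ℂ) ^ (1/4 : ℂ) *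
    theta3 (π * u / (2 * Kel t)) (tauP t) / theta4 (π * u / (2 * Kel t)) (tauP t)

/-- Incomplete elliptic integral of the second kind ℰ(u,t) = ∫₀ᵘ dn²(x,t) dx. -/
def Einc (u : ℝ) (t : ℝ) : ℂ := ∫ x in (0:ℝ)..u, (dnJ (x : ℂ) t) ^ 2

lemma base_pos {t : ℝ} (ht : t < 1) (θ : ℝ) : 0 < 1 - t * Real.sin θ ^ 2 := by
  rcases le_or_gt t 0 with h | h
  · nlinarith [sq_nonneg (Real.sin θ)]
  · nlinarith [Real.sin_sq_le_one θ, sq_nonneg (Real.sin θ)]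
lemma base_ge {t : ℝ} (ht : t < 1) (θ : ℝ) : min 1 (1 - t) ≤ 1 - t * Real.sin θ ^ 2 := by
  rcases le_or_gt t 0 with h | h
  · refine le_trans (min_le_left _ _) ?_; nlinarith [sq_nonneg (Real.sin θ)]
  · refine le_trans (min_le_right _ _) ?_; nlinarith [Real.sin_sq_le_one θ]
lemma sqrt_base_pos {t : ℝ} (ht : t < 1) (θ : ℝ) : 0 < Real.sqrt (1 - t * Real.sin θ ^ 2) :=
  Real.sqrt_pos.2 (base_pos ht θ)
lemma cont_sqrt_base (t : ℝ) : Continuous fun θ : ℝ => Real.sqrt (1 - t * Real.sin θ ^ 2) :=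
  (continuous_const.sub (continuous_const.mul (Real.continuous_sin.pow 2))).sqrt
lemma cont_inv_sqrt_base {t : ℝ} (ht : t < 1) :
    Continuous fun θ : ℝ => 1 / Real.sqrt (1 - t * Real.sin θ ^ 2) :=
  continuous_const.div (cont_sqrt_base t) (fun θ => (sqrt_base_pos ht θ).ne')
lemma cont_inv_cube_base {t : ℝ} (ht : t < 1) :
    Continuous fun θ : ℝ => 1 / Real.sqrt (1 - t * Real.sin θ ^ 2) ^ 3 :=
  continuous_const.div ((cont_sqrt_base t).pow 3)
    (fun θ => pow_ne_zero 3 (sqrt_base_pos ht θ).ne')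
lemma hasDerivAt_inner (θ : ℝ) (x : ℝ) :
    HasDerivAt (fun y : ℝ => 1 - y * Real.sin θ ^ 2) (-(Real.sin θ ^ 2)) x := by
  simpa using ((hasDerivAt_id x).mul_const (Real.sin θ ^ 2)).const_sub 1
lemma hasDerivAt_sqrt_param (θ : ℝ) {x : ℝ} (hx : x < 1) :
    HasDerivAt (fun y : ℝ => Real.sqrt (1 - y * Real.sin θ ^ 2))
      (-(Real.sin θ ^ 2) / (2 * Real.sqrt (1 - x * Real.sin θ ^ 2))) x := by
  have h := (Real.hasDerivAt_sqrt (base_pos hx θ).ne').comp x (hasDerivAt_inner θ x)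
  convert h using 1 <;> try rfl
  field_simp
lemma hasDerivAt_invsqrt_param (θ : ℝ) {x : ℝ} (hx : x < 1) :
    HasDerivAt (fun y : ℝ => 1 / Real.sqrt (1 - y * Real.sin θ ^ 2))
      (Real.sin θ ^ 2 / (2 * Real.sqrt (1 - x * Real.sin θ ^ 2) ^ 3)) x := by
  have h := (hasDerivAt_sqrt_param θ hx).inv (sqrt_base_pos hx θ).ne'
  have hs := sqrt_base_pos hx θ
  simp only [one_div]
  convert h using 1 <;> try rfl
  field_simp
lemma hasDerivAt_g {t : ℝ} (ht : t ∈ Set.Ioo (0:ℝ) 1) (θ : ℝ) :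
    HasDerivAt (fun θ : ℝ => Real.sin θ * Real.cos θ / Real.sqrt (1 - t * Real.sin θ ^ 2))
      ((1/t) * Real.sqrt (1 - t * Real.sin θ ^ 2)
        - ((1-t)/t) * (1 / Real.sqrt (1 - t * Real.sin θ ^ 2) ^ 3)) θ := by
  obtain ⟨ht0, ht1⟩ := ht
  have hA := base_pos ht1 θ
  have hS := sqrt_base_pos ht1 θ
  have hnum : HasDerivAt (fun θ : ℝ => Real.sin θ * Real.cos θ)
      (Real.cos θ * Real.cos θ + Real.sin θ * (-Real.sin θ)) θ :=
    (Real.hasDerivAt_sin θ).mul (Real.hasDerivAt_cos θ)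
  have hinner : HasDerivAt (fun θ : ℝ => 1 - t * Real.sin θ ^ 2)
      (-(t * (2 * Real.sin θ ^ 1 * Real.cos θ))) θ := by
    simpa using (((Real.hasDerivAt_sin θ).pow 2).const_mul t).const_sub 1
  have hden : HasDerivAt (fun θ : ℝ => Real.sqrt (1 - t * Real.sin θ ^ 2))
      (-(t * (2 * Real.sin θ * Real.cos θ)) / (2 * Real.sqrt (1 - t * Real.sin θ ^ 2))) θ := by
    have h2 := (Real.hasDerivAt_sqrt hA.ne').comp θ hinner
    simp only [Function.comp_def] at h2
    convert h2 using 1 <;> try rfl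
    field_simp
  have h := hnum.div hden hS.ne'
  have hS2 : Real.sqrt (1 - t * Real.sin θ ^ 2) ^ 2 = 1 - t * Real.sin θ ^ 2 :=
    Real.sq_sqrt hA.le
  have hsc : Real.sin θ ^ 2 + Real.cos θ ^ 2 = 1 := Real.sin_sq_add_cos_sq θ
  set S := Real.sqrt (1 - t * Real.sin θ ^ 2) with hSdef
  set s := Real.sin θ
  set c := Real.cos θ
  convert h using 1 <;> try rfl
  have e1 : (1/t) * S - ((1-t)/t) * (1 / S^3)
      = (S^2*S^2 - (1-t)) / (t * (S * S^2)) := by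
    field_simp
  have e2 : ((c * c + s * (-s)) * S - s * c * (-(t * (2 * s * c)) / (2 * S))) / S ^ 2
      = ((c*c - s*s)*S^2 + t*s^2*c^2) / (S * S^2) := by
    field_simp; ring
  rw [e1, e2, hS2, div_eq_div_iff (by positivity) (by positivity)]
  linear_combination (-(t * S * (1 - t*s^2))) * hsc
lemma J_eq {t : ℝ} (ht : t ∈ Set.Ioo (0:ℝ) 1) :
    (∫ θ in (0:ℝ)..(π/2), 1 / Real.sqrt (1 - t * Real.sin θ ^ 2) ^ 3) = Eel t / (1 - t) := by
  obtain ⟨ht0, ht1⟩ := ht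
  have hint : ∫ θ in (0:ℝ)..(π/2),
      ((1/t) * Real.sqrt (1 - t * Real.sin θ ^ 2)
        - ((1-t)/t) * (1 / Real.sqrt (1 - t * Real.sin θ ^ 2) ^ 3)) = 0 := by
    rw [integral_eq_sub_of_hasDerivAt (fun θ _ => hasDerivAt_g ⟨ht0, ht1⟩ θ)]
    · simp [Real.cos_pi_div_two, Real.sin_pi_div_two]
    · exact ((continuous_const.mul (cont_sqrt_base t)).sub
        (continuous_const.mul (cont_inv_cube_base ht1))).intervalIntegrable _ _
  rw [intervalIntegral.integral_sub (by exact (continuous_const.mul (cont_sqrt_base t)).intervalIntegrable _ _)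
      (by exact (continuous_const.mul (cont_inv_cube_base ht1)).intervalIntegrable _ _),
    intervalIntegral.integral_const_mul, intervalIntegral.integral_const_mul] at hint
  have hE : (1/t) * Eel t = ((1-t)/t) *
      (∫ θ in (0:ℝ)..(π/2), 1 / Real.sqrt (1 - t * Real.sin θ ^ 2) ^ 3) := by
    unfold Eel; linarith
  have ht0' : t ≠ 0 := ht0.ne'
  have h1t : (1:ℝ) - t ≠ 0 := by linarith
  field_simp at hE ⊢
  linarith
lemma ball_base {t x : ℝ} (ht0 : 0 < t) (ht1 : t < 1)
    (hx : x ∈ Metric.ball t ((1-t)/2)) (θ : ℝ) :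
    (1-t)/2 ≤ 1 - x * Real.sin θ ^ 2 ∧ x < 1 := by
  rw [mem_ball, Real.dist_eq, abs_lt] at hx
  obtain ⟨hx1, hx2⟩ := hx
  constructor
  · rcases le_or_gt x 0 with h | h
    · nlinarith [sq_nonneg (Real.sin θ)]
    · nlinarith [Real.sin_sq_le_one θ, sq_nonneg (Real.sin θ)]
  · linarith
lemma pointwise_E {t : ℝ} (ht0 : 0 < t) (ht1 : t < 1) (θ : ℝ) :
    -(Real.sin θ ^ 2) / (2 * Real.sqrt (1 - t * Real.sin θ ^ 2))
      = (1/(2*t)) * (Real.sqrt (1 - t * Real.sin θ ^ 2)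
          - 1 / Real.sqrt (1 - t * Real.sin θ ^ 2)) := by
  have hA := base_pos ht1 θ
  have hS := sqrt_base_pos ht1 θ
  have hS2 : Real.sqrt (1 - t * Real.sin θ ^ 2) ^ 2 = 1 - t * Real.sin θ ^ 2 :=
    Real.sq_sqrt hA.le
  generalize Real.sqrt (1 - t * Real.sin θ ^ 2) = S at hS hS2 ⊢
  field_simp
  linear_combination -hS2
lemma pointwise_K {t : ℝ} (ht0 : 0 < t) (ht1 : t < 1) (θ : ℝ) :
    Real.sin θ ^ 2 / (2 * Real.sqrt (1 - t * Real.sin θ ^ 2) ^ 3)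
      = (1/(2*t)) * (1 / Real.sqrt (1 - t * Real.sin θ ^ 2) ^ 3
          - 1 / Real.sqrt (1 - t * Real.sin θ ^ 2)) := by
  have hA := base_pos ht1 θ
  have hS := sqrt_base_pos ht1 θ
  have hS2 : Real.sqrt (1 - t * Real.sin θ ^ 2) ^ 2 = 1 - t * Real.sin θ ^ 2 :=
    Real.sq_sqrt hA.le
  generalize Real.sqrt (1 - t * Real.sin θ ^ 2) = S at hS hS2 ⊢
  field_simp
  linear_combination hS2
lemma hasDerivAt_Eel {t : ℝ} (ht : t ∈ Set.Ioo (0:ℝ) 1) :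
    HasDerivAt Eel ((Eel t - Kel t) / (2 * t)) t := by
  obtain ⟨ht0, ht1⟩ := ht
  have hc0 : (0:ℝ) < (1-t)/2 := by linarith
  have hsc0 : (0:ℝ) < Real.sqrt ((1-t)/2) := Real.sqrt_pos.2 hc0
  have key := (intervalIntegral.hasDerivAt_integral_of_dominated_loc_of_deriv_le
    (F := fun x θ => Real.sqrt (1 - x * Real.sin θ ^ 2))
    (F' := fun x θ => -(Real.sin θ ^ 2) / (2 * Real.sqrt (1 - x * Real.sin θ ^ 2)))
    (x₀ := t) (a := 0) (b := π/2) (μ := volume) (s := Metric.ball t ((1-t)/2))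
    (bound := fun _ => 1 / (2 * Real.sqrt ((1-t)/2))) (Metric.ball_mem_nhds t hc0)
    (Eventually.of_forall fun x => (cont_sqrt_base x).aestronglyMeasurable)
    ((cont_sqrt_base t).intervalIntegrable _ _)
    (((Real.continuous_sin.pow 2).neg.div
        (continuous_const.mul (cont_sqrt_base t))
        (fun θ => by
          have := sqrt_base_pos ht1 θ; exact mul_ne_zero two_ne_zero this.ne')).aestronglyMeasurable)
    (Eventually.of_forall fun θ _ x hx => ?_) intervalIntegrable_const
    (Eventually.of_forall fun θ _ x hx =>
      hasDerivAt_sqrt_param θ (ball_base ht0 ht1 hx θ).2)).2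
  · have heq : (∫ θ in (0:ℝ)..(π/2),
        -(Real.sin θ ^ 2) / (2 * Real.sqrt (1 - t * Real.sin θ ^ 2)))
        = (Eel t - Kel t) / (2*t) := by
      rw [integral_congr (g := fun θ => (1/(2*t)) * (Real.sqrt (1 - t * Real.sin θ ^ 2)
          - 1 / Real.sqrt (1 - t * Real.sin θ ^ 2)))
        (fun θ _ => pointwise_E ht0 ht1 θ), intervalIntegral.integral_const_mul,
        integral_sub ((cont_sqrt_base t).intervalIntegrable _ _)
          ((cont_inv_sqrt_base ht1).intervalIntegrable _ _)]
      unfold Eel Kel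
      field_simp
  -- bound goal
    rw [heq] at key
    exact key
  · obtain ⟨hge, hlt⟩ := ball_base ht0 ht1 hx θ
    have hSx : Real.sqrt ((1-t)/2) ≤ Real.sqrt (1 - x * Real.sin θ ^ 2) :=
      Real.sqrt_le_sqrt hge
    rw [norm_div, norm_neg]
    have h1 : ‖Real.sin θ ^ 2‖ ≤ 1 := by
      rw [Real.norm_eq_abs, abs_of_nonneg (sq_nonneg _)]
      exact Real.sin_sq_le_one θ
    have h2 : (2 * Real.sqrt ((1-t)/2)) ≤ ‖2 * Real.sqrt (1 - x * Real.sin θ ^ 2)‖ := by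
      rw [Real.norm_eq_abs, abs_of_nonneg (by positivity)]
      linarith
    exact div_le_div₀ (by norm_num) h1 (by positivity) h2
lemma hasDerivAt_Kel {t : ℝ} (ht : t ∈ Set.Ioo (0:ℝ) 1) :
    HasDerivAt Kel ((Eel t - (1-t) * Kel t) / (2 * t * (1-t))) t := by
  obtain ⟨ht0, ht1⟩ := ht
  have hc0 : (0:ℝ) < (1-t)/2 := by linarith
  have hsc0 : (0:ℝ) < Real.sqrt ((1-t)/2) := Real.sqrt_pos.2 hc0
  have key := (intervalIntegral.hasDerivAt_integral_of_dominated_loc_of_deriv_le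
    (F := fun x θ => 1 / Real.sqrt (1 - x * Real.sin θ ^ 2))
    (F' := fun x θ => Real.sin θ ^ 2 / (2 * Real.sqrt (1 - x * Real.sin θ ^ 2) ^ 3))
    (x₀ := t) (a := 0) (b := π/2) (μ := volume) (s := Metric.ball t ((1-t)/2))
    (bound := fun _ => 1 / (2 * Real.sqrt ((1-t)/2) ^ 3)) (Metric.ball_mem_nhds t hc0)
    (Eventually.mono (Iio_mem_nhds ht1) fun x hx =>
      (cont_inv_sqrt_base hx).aestronglyMeasurable)
    ((cont_inv_sqrt_base ht1).intervalIntegrable _ _)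
    (((Real.continuous_sin.pow 2).div
        (continuous_const.mul ((cont_sqrt_base t).pow 3))
        (fun θ => by
          have := sqrt_base_pos ht1 θ; exact mul_ne_zero two_ne_zero (pow_ne_zero 3 this.ne'))).aestronglyMeasurable)
    (Eventually.of_forall fun θ _ x hx => ?_) intervalIntegrable_const
    (Eventually.of_forall fun θ _ x hx =>
      hasDerivAt_invsqrt_param θ (ball_base ht0 ht1 hx θ).2)).2
  · have heq : (∫ θ in (0:ℝ)..(π/2),
        Real.sin θ ^ 2 / (2 * Real.sqrt (1 - t * Real.sin θ ^ 2) ^ 3))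
        = (Eel t - (1-t) * Kel t) / (2 * t * (1-t)) := by
      rw [integral_congr (g := fun θ => (1/(2*t)) * (1 / Real.sqrt (1 - t * Real.sin θ ^ 2) ^ 3
          - 1 / Real.sqrt (1 - t * Real.sin θ ^ 2)))
        (fun θ _ => pointwise_K ht0 ht1 θ), intervalIntegral.integral_const_mul,
        integral_sub ((cont_inv_cube_base ht1).intervalIntegrable _ _)
          ((cont_inv_sqrt_base ht1).intervalIntegrable _ _),
        J_eq ⟨ht0, ht1⟩]
      show (1/(2*t)) * (Eel t / (1-t) - Kel t) = _
      have h1t : (1:ℝ) - t ≠ 0 := by linarith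
      field_simp
    rw [heq] at key
    exact key
  · obtain ⟨hge, hlt⟩ := ball_base ht0 ht1 hx θ
    have hSx : Real.sqrt ((1-t)/2) ≤ Real.sqrt (1 - x * Real.sin θ ^ 2) :=
      Real.sqrt_le_sqrt hge
    rw [norm_div]
    have h1 : ‖Real.sin θ ^ 2‖ ≤ 1 := by
      rw [Real.norm_eq_abs, abs_of_nonneg (sq_nonneg _)]
      exact Real.sin_sq_le_one θ
    have h2 : (2 * Real.sqrt ((1-t)/2) ^ 3) ≤ ‖2 * Real.sqrt (1 - x * Real.sin θ ^ 2) ^ 3‖ := by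
      rw [Real.norm_eq_abs, abs_of_nonneg (by positivity)]
      have := pow_le_pow_left₀ hsc0.le hSx 3
      linarith
    exact div_le_div₀ (by norm_num) h1 (by positivity) h2
lemma tendsto_Eel0 : Tendsto Eel (nhdsWithin 0 (Set.Ioi 0)) (nhds (π/2)) := by
  have h := intervalIntegral.tendsto_integral_filter_of_dominated_convergence
    (μ := volume) (a := 0) (b := π/2) (l := nhdsWithin (0:ℝ) (Set.Ioi 0))
    (F := fun t θ => Real.sqrt (1 - t * Real.sin θ ^ 2)) (f := fun _ => (1:ℝ))
    (fun _ => (1:ℝ))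
    (Eventually.of_forall fun t => (cont_sqrt_base t).aestronglyMeasurable)
    ?_ intervalIntegrable_const ?_
  · have : (∫ _ in (0:ℝ)..(π/2), (1:ℝ)) = π/2 := by simp
    rw [this] at h
    exact h
  · filter_upwards [self_mem_nhdsWithin] with t (ht : t ∈ Set.Ioi 0)
    refine Eventually.of_forall fun θ _ => ?_
    rw [Real.norm_eq_abs, abs_of_nonneg (Real.sqrt_nonneg _)]
    exact Real.sqrt_le_one.mpr (by nlinarith [sq_nonneg (Real.sin θ), Set.mem_Ioi.mp ht])
  · refine Eventually.of_forall fun θ _ => ?_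
    have : ContinuousAt (fun t : ℝ => Real.sqrt (1 - t * Real.sin θ ^ 2)) 0 := by
      apply Continuous.continuousAt
      exact (continuous_const.sub (continuous_id.mul continuous_const)).sqrt
    have h0 := this.tendsto
    simp at h0
    exact h0.mono_left nhdsWithin_le_nhds
lemma mem_half : Set.Ioo (0:ℝ) (1/2) ∈ nhdsWithin (0:ℝ) (Set.Ioi 0) :=
  Ioo_mem_nhdsGT_of_mem (Set.mem_Ico.mpr ⟨le_refl (0:ℝ), by norm_num⟩)
lemma tendsto_Kel0 : Tendsto Kel (nhdsWithin 0 (Set.Ioi 0)) (nhds (π/2)) := by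
  have h := intervalIntegral.tendsto_integral_filter_of_dominated_convergence
    (μ := volume) (a := 0) (b := π/2) (l := nhdsWithin (0:ℝ) (Set.Ioi 0))
    (F := fun t θ => 1 / Real.sqrt (1 - t * Real.sin θ ^ 2)) (f := fun _ => (1:ℝ))
    (fun _ => Real.sqrt 2)
    ?_ ?_ intervalIntegrable_const ?_
  · have : (∫ _ in (0:ℝ)..(π/2), (1:ℝ)) = π/2 := by simp
    rw [this] at h
    exact h
  · filter_upwards [mem_half] with t ht
    exact (cont_inv_sqrt_base (by linarith [ht.2] : t < 1)).aestronglyMeasurable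
  · filter_upwards [mem_half] with t (ht : t ∈ Set.Ioo (0:ℝ) (1/2))
    refine Eventually.of_forall fun θ _ => ?_
    have ht1 : t < 1 := by linarith [ht.2]
    have hS := sqrt_base_pos ht1 θ
    have hhalf : ((2:ℝ))⁻¹ ≤ 1 - t * Real.sin θ ^ 2 := by
      nlinarith [Real.sin_sq_le_one θ, sq_nonneg (Real.sin θ), ht.1, ht.2]
    have h1 : Real.sqrt (2⁻¹) ≤ Real.sqrt (1 - t * Real.sin θ ^ 2) :=
      Real.sqrt_le_sqrt hhalf
    rw [Real.sqrt_inv] at h1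
    rw [Real.norm_eq_abs, abs_of_nonneg (by positivity)]
    calc 1 / Real.sqrt (1 - t * Real.sin θ ^ 2) ≤ 1 / (Real.sqrt 2)⁻¹ :=
          one_div_le_one_div_of_le (by positivity) h1
      _ = Real.sqrt 2 := by rw [one_div, inv_inv]
  · refine Eventually.of_forall fun θ _ => ?_
    have hc : ContinuousAt (fun t : ℝ => 1 / Real.sqrt (1 - t * Real.sin θ ^ 2)) 0 := by
      refine ContinuousAt.div continuousAt_const ?_ ?_
      · exact ((continuous_const.sub (continuous_id.mul continuous_const)).sqrt).continuousAt
      · simpa using (sqrt_base_pos (by norm_num : (0:ℝ) < 1) θ).ne'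
    simpa using hc.tendsto.mono_left nhdsWithin_le_nhds
lemma tendsto_Eel1 : Tendsto (fun t => Eel (1-t)) (nhdsWithin 0 (Set.Ioi 0)) (nhds 1) := by
  have h := intervalIntegral.tendsto_integral_filter_of_dominated_convergence
    (μ := volume) (a := 0) (b := π/2) (l := nhdsWithin (0:ℝ) (Set.Ioi 0))
    (F := fun t θ => Real.sqrt (1 - (1-t) * Real.sin θ ^ 2))
    (f := fun θ => Real.sqrt (1 - Real.sin θ ^ 2))
    (fun _ => (1:ℝ))
    (Eventually.of_forall fun t => (cont_sqrt_base (1-t)).aestronglyMeasurable)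
    ?_ intervalIntegrable_const ?_
  · have heq : (∫ θ in (0:ℝ)..(π/2), Real.sqrt (1 - Real.sin θ ^ 2)) = 1 := by
      rw [integral_congr (g := Real.cos) ?_]
      · simp [integral_cos]
      · intro θ hθ
        rw [Set.uIcc_of_le (by positivity : (0:ℝ) ≤ π/2)] at hθ
        have hc : 0 ≤ Real.cos θ := Real.cos_nonneg_of_mem_Icc
          ⟨by linarith [hθ.1, Real.pi_pos], hθ.2⟩
        show Real.sqrt (1 - Real.sin θ ^ 2) = Real.cos θ
        rw [show (1:ℝ) - Real.sin θ ^ 2 = Real.cos θ ^ 2 by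
          nlinarith [Real.sin_sq_add_cos_sq θ]]
        exact Real.sqrt_sq hc
    rw [heq] at h
    exact h
  · filter_upwards [mem_half] with t (ht : t ∈ Set.Ioo (0:ℝ) (1/2))
    refine Eventually.of_forall fun θ _ => ?_
    rw [Real.norm_eq_abs, abs_of_nonneg (Real.sqrt_nonneg _)]
    exact Real.sqrt_le_one.mpr
      (by nlinarith [sq_nonneg (Real.sin θ), ht.1, ht.2])
  · refine Eventually.of_forall fun θ _ => ?_
    have hc : ContinuousAt (fun t : ℝ => Real.sqrt (1 - (1-t) * Real.sin θ ^ 2)) 0 :=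
      ((continuous_const.sub ((continuous_const.sub continuous_id).mul
        continuous_const)).sqrt).continuousAt
    simpa using hc.tendsto.mono_left nhdsWithin_le_nhds

lemma EK_diff_bound {t : ℝ} (ht : t ∈ Set.Ioo (0:ℝ) 1) :
    |Eel t - Kel t| ≤ t / Real.sqrt (1-t) * (π/2) := by
  obtain ⟨ht0, ht1⟩ := ht
  have hsub : Eel t - Kel t = ∫ θ in (0:ℝ)..(π/2),
      (Real.sqrt (1 - t * Real.sin θ ^ 2) - 1 / Real.sqrt (1 - t * Real.sin θ ^ 2)) := by
    unfold Eel Kel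
    rw [integral_sub ((cont_sqrt_base t).intervalIntegrable _ _)
      ((cont_inv_sqrt_base ht1).intervalIntegrable _ _)]
  rw [hsub]
  have h := intervalIntegral.norm_integral_le_of_norm_le_const
    (C := t / Real.sqrt (1-t)) (a := (0:ℝ)) (b := π/2)
    (f := fun θ => Real.sqrt (1 - t * Real.sin θ ^ 2)
      - 1 / Real.sqrt (1 - t * Real.sin θ ^ 2)) ?_
  · rw [Real.norm_eq_abs] at h
    calc |_| ≤ t / Real.sqrt (1-t) * |π/2 - 0| := h
      _ = t / Real.sqrt (1-t) * (π/2) := by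
          rw [sub_zero, abs_of_nonneg (by positivity)]
  · intro θ _
    have hA := base_pos ht1 θ
    have hS := sqrt_base_pos ht1 θ
    have hS2 : Real.sqrt (1 - t * Real.sin θ ^ 2) ^ 2 = 1 - t * Real.sin θ ^ 2 :=
      Real.sq_sqrt hA.le
    have hidentity : Real.sqrt (1 - t * Real.sin θ ^ 2)
        - 1 / Real.sqrt (1 - t * Real.sin θ ^ 2)
        = -(t * Real.sin θ ^ 2) / Real.sqrt (1 - t * Real.sin θ ^ 2) := by
      field_simp
      linear_combination hS2
    show |Real.sqrt (1 - t * Real.sin θ ^ 2) - 1 / Real.sqrt (1 - t * Real.sin θ ^ 2)|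
      ≤ t / Real.sqrt (1-t)
    rw [hidentity, abs_div, abs_of_nonneg hS.le, abs_neg,
      abs_of_nonneg (by positivity : (0:ℝ) ≤ t * Real.sin θ ^ 2)]
    have hden : Real.sqrt (1-t) ≤ Real.sqrt (1 - t * Real.sin θ ^ 2) :=
      Real.sqrt_le_sqrt (by nlinarith [Real.sin_sq_le_one θ])
    have hnum : t * Real.sin θ ^ 2 ≤ t := by nlinarith [Real.sin_sq_le_one θ]
    exact div_le_div₀ ht0.le hnum (Real.sqrt_pos.2 (by linarith)) hden
lemma Kel_bound {t : ℝ} (ht : t ∈ Set.Ioo (0:ℝ) 1) :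
    |Kel (1-t)| ≤ 1 / Real.sqrt t * (π/2) := by
  obtain ⟨ht0, ht1⟩ := ht
  have h := intervalIntegral.norm_integral_le_of_norm_le_const
    (C := 1 / Real.sqrt t) (a := (0:ℝ)) (b := π/2)
    (f := fun θ => 1 / Real.sqrt (1 - (1-t) * Real.sin θ ^ 2)) ?_
  · rw [Real.norm_eq_abs] at h
    calc |Kel (1-t)| ≤ 1 / Real.sqrt t * |π/2 - 0| := h
      _ = 1 / Real.sqrt t * (π/2) := by
          rw [sub_zero, abs_of_nonneg (by positivity)]
  · intro θ _
    have hA : t ≤ 1 - (1-t) * Real.sin θ ^ 2 := by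
      nlinarith [Real.sin_sq_le_one θ, sq_nonneg (Real.sin θ)]
    have hS : Real.sqrt t ≤ Real.sqrt (1 - (1-t) * Real.sin θ ^ 2) :=
      Real.sqrt_le_sqrt hA
    have hSt : 0 < Real.sqrt t := Real.sqrt_pos.2 ht0
    rw [Real.norm_eq_abs, abs_of_nonneg (by positivity)]
    exact one_div_le_one_div_of_le hSt hS
lemma cross_tendsto :
    Tendsto (fun t => (Eel t - Kel t) * Kel (1-t)) (nhdsWithin 0 (Set.Ioi 0)) (nhds 0) := by
  apply squeeze_zero_norm'
    (a := fun t => (π/2)^2 * (Real.sqrt t / Real.sqrt (1-t)))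
  · filter_upwards [mem_half] with t (ht : t ∈ Set.Ioo (0:ℝ) (1/2))
    have ht' : t ∈ Set.Ioo (0:ℝ) 1 := ⟨ht.1, by linarith [ht.2]⟩
    rw [Real.norm_eq_abs, abs_mul]
    calc |Eel t - Kel t| * |Kel (1-t)|
        ≤ (t / Real.sqrt (1-t) * (π/2)) * (1 / Real.sqrt t * (π/2)) := by
          refine mul_le_mul (EK_diff_bound ht') (Kel_bound ht') (abs_nonneg _) ?_
          have h0t := ht'.1.le
          have hsq := Real.sqrt_nonneg (1-t)
          have hpi := Real.pi_pos
          positivity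
      _ = (π/2)^2 * (Real.sqrt t / Real.sqrt (1-t)) := by
          have h1 : Real.sqrt t * Real.sqrt t = t := Real.mul_self_sqrt ht'.1.le
          have h2 : (0:ℝ) < Real.sqrt t := Real.sqrt_pos.2 ht'.1
          have h3 : (0:ℝ) < Real.sqrt (1-t) := Real.sqrt_pos.2 (by linarith [ht'.2])
          have h4 : Real.sqrt t ^ 2 = t := Real.sq_sqrt ht'.1.le
          field_simp
          linear_combination -h4
  · have hc : ContinuousAt (fun t : ℝ => (π/2)^2 * (Real.sqrt t / Real.sqrt (1-t))) 0 := by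
      refine ContinuousAt.mul continuousAt_const ?_
      refine ContinuousAt.div (Real.continuous_sqrt.continuousAt)
        ((continuous_const.sub continuous_id).sqrt.continuousAt) ?_
      simp [Real.sqrt_one]
    have h0 := hc.tendsto
    simp [Real.sqrt_zero] at h0
    exact h0.mono_left nhdsWithin_le_nhds
def Lfun (t : ℝ) : ℝ := Eel t * Kel (1-t) + Eel (1-t) * Kel t - Kel (1-t) * Kel t
lemma hasDerivAt_L {t : ℝ} (ht : t ∈ Set.Ioo (0:ℝ) 1) : HasDerivAt Lfun 0 t := by
  obtain ⟨ht0, ht1⟩ := ht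
  have ht' : 1 - t ∈ Set.Ioo (0:ℝ) 1 := ⟨by linarith, by linarith⟩
  have hlin : HasDerivAt (fun s : ℝ => 1 - s) (-1) t := by
    simpa using (hasDerivAt_id t).const_sub 1
  have hE := hasDerivAt_Eel ⟨ht0, ht1⟩
  have hK := hasDerivAt_Kel ⟨ht0, ht1⟩
  have hE1 : HasDerivAt (fun s : ℝ => Eel (1-s))
      ((Eel (1-t) - Kel (1-t)) / (2 * (1-t)) * (-1)) t :=
    (hasDerivAt_Eel ht').comp t hlin
  have hK1 : HasDerivAt (fun s : ℝ => Kel (1-s))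
      ((Eel (1-t) - (1-(1-t)) * Kel (1-t)) / (2 * (1-t) * (1-(1-t))) * (-1)) t :=
    (hasDerivAt_Kel ht').comp t hlin
  have h := ((hE.mul hK1).add (hE1.mul hK)).sub (hK1.mul hK)
  convert h using 1 <;> try rfl
  have h2t : (2:ℝ) * t ≠ 0 := by positivity
  have h1t : (1:ℝ) - t ≠ 0 := by linarith
  have h1t' : (1:ℝ) - (1-t) ≠ 0 := by simp; linarith
  field_simp
  ring
lemma L_const {s u : ℝ} (hs : s ∈ Set.Ioo (0:ℝ) 1) (hu : u ∈ Set.Ioo (0:ℝ) 1) :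
    Lfun s = Lfun u := by
  wlog h : s ≤ u generalizing s u
  · exact (this hu hs (le_of_not_ge h)).symm
  rcases eq_or_lt_of_le h with rfl | hlt
  · rfl
  have hsub : Set.Icc s u ⊆ Set.Ioo (0:ℝ) 1 := fun x hx =>
    ⟨lt_of_lt_of_le hs.1 hx.1, lt_of_le_of_lt hx.2 hu.2⟩
  obtain ⟨c, _, hc⟩ := exists_hasDerivAt_eq_slope Lfun (fun _ => 0) hlt
    (fun x hx => (hasDerivAt_L (hsub hx)).continuousAt.continuousWithinAt)
    (fun x hx => hasDerivAt_L (hsub ⟨hx.1.le, hx.2.le⟩))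
  have hc' : (Lfun u - Lfun s)/(u-s) = 0 := by simpa using hc.symm
  rcases div_eq_zero_iff.mp hc' with hc0 | hc0
  · linarith
  · have : u - s ≠ 0 := sub_ne_zero.2 hlt.ne'
    exact absurd hc0 this
lemma tendsto_L : Tendsto Lfun (nhdsWithin 0 (Set.Ioi 0)) (nhds (π/2)) := by
  have heq : Lfun = fun t => (Eel t - Kel t) * Kel (1-t) + Eel (1-t) * Kel t := by
    funext t; unfold Lfun; ring
  rw [heq]
  have h := cross_tendsto.add (tendsto_Eel1.mul tendsto_Kel0)
  simpa using h

theorem legendre_relation (t : ℝ) (ht : t ∈ Set.Ioo (0:ℝ) 1) :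
    Eel t * Kel (1 - t) + Eel (1 - t) * Kel t - Kel (1 - t) * Kel t = π / 2 := by
  have hconst : ∀ᶠ s in nhdsWithin (0:ℝ) (Set.Ioi 0), Lfun s = Lfun t := by
    filter_upwards [Ioo_mem_nhdsGT_of_mem
      (Set.mem_Ico.mpr ⟨le_refl (0:ℝ), zero_lt_one⟩)] with s hs
    exact L_const hs ht
  have h1 : Tendsto Lfun (nhdsWithin (0:ℝ) (Set.Ioi 0)) (nhds (Lfun t)) :=
    Tendsto.congr' (by filter_upwards [hconst] with s hs using hs.symm) tendsto_const_nhds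
  have := tendsto_nhds_unique h1 tendsto_L
  unfold Lfun at this
  linarith

end
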